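/- Fix θ > 0, Δt > 0, Σ ∈ ℝ^{m×d} with ΣΣᵀ positive definite, A ∈ ℝ^{m×n}, a ∈ ℝ^m, Ξ ∈ ℝ^d, Λ ∈ ℝ^{n×d}, b ∈ ℝ^n, B̃ ∈ ℝ^{n×n}, a symmetric matrix P ∈ ℝ^{n×n}, p ∈ ℝ^n, a symmetric positive definite Ψ ∈ ℝ^{m×m}, and x ∈ ℝ^n. Set 𝒜 := ΛᵀPΛΔt − I_d, assume 𝒜 is negative definite, and set ℬ := θΣᵀ(ΣΣᵀ)⁻¹Σ − 𝒜. Define F(h,γ,η) := (θ/2)(h+η)ᵀΣΣᵀ(h+η)Δt − θ(h+η)ᵀ(a+Ax)Δt − θ((h+η)ᵀΣ − Ξᵀ)γΔt + (1/2)γᵀ𝒜γΔt + γᵀΛᵀ(P(bΔt+B̃x)+p)Δt − (1/2)ηᵀΨ⁻¹η for h, η ∈ ℝ^m, γ ∈ ℝ^d. Then the unique point at which all three gradients of F (in h, in γ, and in η) vanish is (h*, γ*, η*) with η* = 0, γ* = ℬ⁻¹( −θΣᵀ(ΣΣᵀ)⁻¹(a+Ax) + ΛᵀP(bΔt+B̃x)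 + Λᵀp + θΞ ), and h* = (ΣΣᵀ)⁻¹[ (I_m − θΣℬ⁻¹Σᵀ(ΣΣᵀ)⁻¹)(a+Ax) + Σℬ⁻¹( ΛᵀP(bΔt+B̃x) + Λᵀp + θΞ ) ]. -/

import Mathlib

open Matrix

/-- The control-dependent part `F` of the one-step Hamiltonian of the
relative-entropy-penalized stochastic game, with `𝒜 = ΛᵀPΛΔt − I_d`:
`F(h,γ,η) = (θ/2)(h+η)ᵀΣΣᵀ(h+η)Δt − θ(h+η)ᵀ(a+Ax)Δt − θ((h+η)ᵀΣ − Ξᵀ)γΔt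
  + (1/2)γᵀ𝒜γΔt + γᵀΛᵀ(P(bΔt+B̃x)+p)Δt − (1/2)ηᵀΨ⁻¹η`. -/
noncomputable def FFun {m n d : ℕ} (θ Δt : ℝ) (S : Matrix (Fin m) (Fin d) ℝ)
    (A : Matrix (Fin m) (Fin n) ℝ) (a : Fin m → ℝ) (Ξ : Fin d → ℝ)
    (Λ : Matrix (Fin n) (Fin d) ℝ) (b : Fin n → ℝ) (Bt : Matrix (Fin n) (Fin n) ℝ)
    (P : Matrix (Fin n) (Fin n) ℝ) (p : Fin n → ℝ) (Ψ : Matrix (Fin m) (Fin m) ℝ)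
    (x : Fin n → ℝ) (h : Fin m → ℝ) (γ : Fin d → ℝ) (η : Fin m → ℝ) : ℝ :=
  (θ / 2) * ((h + η) ⬝ᵥ ((S * Sᵀ) *ᵥ (h + η))) * Δt
    - θ * ((h + η) ⬝ᵥ (a + A *ᵥ x)) * Δt
    - θ * (((Sᵀ *ᵥ (h + η)) - Ξ) ⬝ᵥ γ) * Δt
    + (1 / 2 : ℝ) * (γ ⬝ᵥ ((Δt • (Λᵀ * P * Λ) - 1) *ᵥ γ)) * Δt
    + (γ ⬝ᵥ (Λᵀ *ᵥ (P *ᵥ (Δt • b + Bt *ᵥ x) + p))) * Δt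
    - (1 / 2 : ℝ) * (η ⬝ᵥ (Ψ⁻¹ *ᵥ η))

/-- `ℬ = θΣᵀ(ΣΣᵀ)⁻¹Σ − 𝒜` with `𝒜 = ΛᵀPΛΔt − I_d`. -/
noncomputable def calB {m n d : ℕ} (θ Δt : ℝ) (S : Matrix (Fin m) (Fin d) ℝ)
    (Λ : Matrix (Fin n) (Fin d) ℝ) (P : Matrix (Fin n) (Fin n) ℝ) :
    Matrix (Fin d) (Fin d) ℝ :=
  θ • (Sᵀ * (S * Sᵀ)⁻¹ * S) - (Δt • (Λᵀ * P * Λ) - 1)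


noncomputable def dotCLM {k : ℕ} (w : Fin k → ℝ) : (Fin k → ℝ) →L[ℝ] ℝ :=
  LinearMap.toContinuousLinearMap
    { toFun := fun y => y ⬝ᵥ w
      map_add' := fun _ _ => add_dotProduct _ _ _
      map_smul' := fun c v => by simpa using smul_dotProduct c v w }

@[simp] lemma dotCLM_apply {k : ℕ} (w v : Fin k → ℝ) : dotCLM w v = v ⬝ᵥ w := by
  simp [dotCLM]

lemma dotCLM_eq_zero_iff {k : ℕ} (w : Fin k → ℝ) : dotCLM w = 0 ↔ w = 0 := by
  constructor
  · intro hw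
    funext i
    have := congrFun (congrArg DFunLike.coe hw) (Pi.single i 1)
    simpa [dotCLM_apply, single_dotProduct] using this
  · rintro rfl; ext v; simp

noncomputable def quadB {k : ℕ} (Q : Matrix (Fin k) (Fin k) ℝ) :
    (Fin k → ℝ) →L[ℝ] (Fin k → ℝ) →L[ℝ] ℝ :=
  LinearMap.toContinuousLinearMap
    { toFun := fun u => dotCLM (Qᵀ *ᵥ u)
      map_add' := fun u v => by ext z; simp [Matrix.mulVec_add, dotProduct_add]
      map_smul' := fun c u => by ext z; simp [Matrix.mulVec_smul, dotProduct_smul] }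

@[simp] lemma quadB_apply {k : ℕ} (Q : Matrix (Fin k) (Fin k) ℝ) (u v : Fin k → ℝ) :
    quadB Q u v = v ⬝ᵥ (Qᵀ *ᵥ u) := by simp [quadB]

lemma dot_vecMul {k l : ℕ} (v : Fin k → ℝ) (w : Fin l → ℝ) (Q : Matrix (Fin l) (Fin k) ℝ) :
    v ⬝ᵥ (w ᵥ* Q) = (Q *ᵥ v) ⬝ᵥ w := by
  rw [dotProduct_comm, ← Matrix.dotProduct_mulVec, dotProduct_comm]

lemma hasFDerivAt_quadForm {k : ℕ} (Q : Matrix (Fin k) (Fin k) ℝ) (y : Fin k → ℝ) :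
    HasFDerivAt (fun z => z ⬝ᵥ (Q *ᵥ z)) (dotCLM ((Q + Qᵀ) *ᵥ y)) y := by
  have hb := (quadB Q).isBoundedBilinearMap.hasFDerivAt (y, y)
  have hid : HasFDerivAt (fun z : Fin k → ℝ => (z, z))
      ((ContinuousLinearMap.id ℝ _).prod (ContinuousLinearMap.id ℝ _)) y :=
    (hasFDerivAt_id y).prodMk (hasFDerivAt_id y)
  have hc := HasFDerivAt.comp (f := fun z : Fin k → ℝ => (z, z)) y hb hid
  refine (hc.congr_of_eventuallyEq (Filter.Eventually.of_forall fun z => ?_)).congr_fderiv ?_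
  · simp [Matrix.dotProduct_mulVec, Matrix.vecMul_transpose]
    rw [dotProduct_comm, dot_vecMul]
  · ext v
    simp only [IsBoundedBilinearMap.deriv_apply, ContinuousLinearMap.comp_apply,
      ContinuousLinearMap.prod_apply, ContinuousLinearMap.coe_id', id_eq, quadB_apply,
      dotCLM_apply, Matrix.mulVec_transpose, Matrix.add_mulVec, dotProduct_add]
    rw [dot_vecMul, dot_vecMul, add_comm]
    congr 1
    rw [dotProduct_comm]

lemma hasFDerivAt_canon {k : ℕ} (c₁ : ℝ) (Q : Matrix (Fin k) (Fin k) ℝ)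
    (w : Fin k → ℝ) (C : ℝ) (y : Fin k → ℝ) :
    HasFDerivAt (fun z => c₁ * (z ⬝ᵥ (Q *ᵥ z)) + z ⬝ᵥ w + C)
      (dotCLM (c₁ • ((Q + Qᵀ) *ᵥ y) + w)) y := by
  have h1 := (hasFDerivAt_quadForm Q y).const_mul c₁
  have h2 : HasFDerivAt (fun z : Fin k → ℝ => z ⬝ᵥ w) (dotCLM w) y :=
    (dotCLM w).hasFDerivAt
  have := ((h1.add h2).add_const C)
  refine this.congr_fderiv ?_
  ext v
  simp [smul_dotProduct, dotProduct_add, add_dotProduct, mul_comm]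

lemma fderiv_eq_zero_iff_of_canon {k : ℕ} {f : (Fin k → ℝ) → ℝ} {c₁ : ℝ}
    {Q : Matrix (Fin k) (Fin k) ℝ} {w : Fin k → ℝ} {C : ℝ} {y : Fin k → ℝ}
    (hf : ∀ z, f z = c₁ * (z ⬝ᵥ (Q *ᵥ z)) + z ⬝ᵥ w + C) :
    fderiv ℝ f y = 0 ↔ c₁ • ((Q + Qᵀ) *ᵥ y) + w = 0 := by
  have hfe : f = fun z => c₁ * (z ⬝ᵥ (Q *ᵥ z)) + z ⬝ᵥ w + C := funext hf
  rw [hfe, (hasFDerivAt_canon c₁ Q w C y).fderiv, dotCLM_eq_zero_iff]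

lemma dot_mulVec_symm {k : ℕ} {Q : Matrix (Fin k) (Fin k) ℝ} (hQ : Qᵀ = Q)
    (u v : Fin k → ℝ) : u ⬝ᵥ (Q *ᵥ v) = v ⬝ᵥ (Q *ᵥ u) := by
  rw [Matrix.dotProduct_mulVec, ← Matrix.mulVec_transpose, hQ, dotProduct_comm]

lemma transpose_mulVec_dot {k l : ℕ} (Q : Matrix (Fin k) (Fin l) ℝ)
    (z : Fin k → ℝ) (γ : Fin l → ℝ) : (Qᵀ *ᵥ z) ⬝ᵥ γ = z ⬝ᵥ (Q *ᵥ γ) := by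
  rw [Matrix.mulVec_transpose, dotProduct_comm, dot_vecMul, dotProduct_comm]

lemma posSemidef_smul_real {k : ℕ} {A : Matrix (Fin k) (Fin k) ℝ} (hA : A.PosSemidef)
    {t : ℝ} (ht : 0 ≤ t) : (t • A).PosSemidef := by
  exact hA.smul ht

section grads

variable {m n d : ℕ} (θ Δt : ℝ) (S : Matrix (Fin m) (Fin d) ℝ)
    (A : Matrix (Fin m) (Fin n) ℝ) (a : Fin m → ℝ) (Ξ : Fin d → ℝ)
    (Λ : Matrix (Fin n) (Fin d) ℝ) (b : Fin n → ℝ) (Bt : Matrix (Fin n) (Fin n) ℝ)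
    (P : Matrix (Fin n) (Fin n) ℝ) (p : Fin n → ℝ) (Ψ : Matrix (Fin m) (Fin m) ℝ)
    (x : Fin n → ℝ) (h : Fin m → ℝ) (γ : Fin d → ℝ) (η : Fin m → ℝ)

lemma gradH_iff (hθΔt : θ * Δt ≠ 0) (hM : (S * Sᵀ)ᵀ = S * Sᵀ) :
    fderiv ℝ (fun h' => FFun θ Δt S A a Ξ Λ b Bt P p Ψ x h' γ η) h = 0 ↔
      (S * Sᵀ) *ᵥ (h + η) = (a + A *ᵥ x) + S *ᵥ γ := by
  rw [fderiv_eq_zero_iff_of_canon (c₁ := θ * Δt / 2) (Q := S * Sᵀ)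
      (w := (θ * Δt) • ((S * Sᵀ) *ᵥ η - (a + A *ᵥ x) - S *ᵥ γ))
      (C := θ / 2 * (η ⬝ᵥ ((S * Sᵀ) *ᵥ η)) * Δt - θ * (η ⬝ᵥ (a + A *ᵥ x)) * Δt
        - θ * (η ⬝ᵥ (S *ᵥ γ) - Ξ ⬝ᵥ γ) * Δt
        + (1 / 2 : ℝ) * (γ ⬝ᵥ ((Δt • (Λᵀ * P * Λ) - 1) *ᵥ γ)) * Δt
        + (γ ⬝ᵥ (Λᵀ *ᵥ (P *ᵥ (Δt • b + Bt *ᵥ x) + p))) * Δt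
        - (1 / 2 : ℝ) * (η ⬝ᵥ (Ψ⁻¹ *ᵥ η)))]
  · have he : (θ * Δt / 2) • ((S * Sᵀ + (S * Sᵀ)ᵀ) *ᵥ h)
        + (θ * Δt) • ((S * Sᵀ) *ᵥ η - (a + A *ᵥ x) - S *ᵥ γ)
        = (θ * Δt) • ((S * Sᵀ) *ᵥ (h + η) - ((a + A *ᵥ x) + S *ᵥ γ)) := by
      rw [hM]
      funext i
      simp [Matrix.add_mulVec, Matrix.mulVec_add]
      ring
    rw [he, smul_eq_zero, sub_eq_zero]
    simp [hθΔt]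
  · intro z
    simp only [FFun, Matrix.mulVec_add, dotProduct_add, add_dotProduct, sub_dotProduct,
      dotProduct_sub, dotProduct_smul, smul_eq_mul, transpose_mulVec_dot]
    rw [dot_mulVec_symm hM η z]
    ring

lemma gradG_iff (hΔt : Δt ≠ 0) (hAa : (Δt • (Λᵀ * P * Λ) - 1)ᵀ = Δt • (Λᵀ * P * Λ) - 1) :
    fderiv ℝ (fun γ' => FFun θ Δt S A a Ξ Λ b Bt P p Ψ x h γ' η) γ = 0 ↔
      (Δt • (Λᵀ * P * Λ) - 1) *ᵥ γ + Λᵀ *ᵥ (P *ᵥ (Δt • b + Bt *ᵥ x) + p) + θ • Ξ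
        = θ • (Sᵀ *ᵥ (h + η)) := by
  rw [fderiv_eq_zero_iff_of_canon (c₁ := Δt / 2) (Q := Δt • (Λᵀ * P * Λ) - 1)
      (w := Δt • (Λᵀ *ᵥ (P *ᵥ (Δt • b + Bt *ᵥ x) + p) - θ • (Sᵀ *ᵥ (h + η) - Ξ)))
      (C := θ / 2 * ((h + η) ⬝ᵥ ((S * Sᵀ) *ᵥ (h + η))) * Δt
        - θ * ((h + η) ⬝ᵥ (a + A *ᵥ x)) * Δt - (1 / 2 : ℝ) * (η ⬝ᵥ (Ψ⁻¹ *ᵥ η)))]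
  · have he : (Δt / 2) • (((Δt • (Λᵀ * P * Λ) - 1) + (Δt • (Λᵀ * P * Λ) - 1)ᵀ) *ᵥ γ)
        + Δt • (Λᵀ *ᵥ (P *ᵥ (Δt • b + Bt *ᵥ x) + p) - θ • (Sᵀ *ᵥ (h + η) - Ξ))
        = Δt • (((Δt • (Λᵀ * P * Λ) - 1) *ᵥ γ + Λᵀ *ᵥ (P *ᵥ (Δt • b + Bt *ᵥ x) + p)
            + θ • Ξ) - θ • (Sᵀ *ᵥ (h + η))) := by
      rw [hAa]
      funext i
      simp [Matrix.add_mulVec]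
      ring
    rw [he, smul_eq_zero, sub_eq_zero]
    simp [hΔt]
  · intro z
    simp only [FFun, sub_dotProduct, dotProduct_sub, dotProduct_smul, smul_eq_mul]
    rw [dotProduct_comm (Sᵀ *ᵥ (h + η)) z, dotProduct_comm Ξ z]
    ring

lemma gradE_iff (hM : (S * Sᵀ)ᵀ = S * Sᵀ) (hΨi : (Ψ⁻¹)ᵀ = Ψ⁻¹) :
    fderiv ℝ (fun η' => FFun θ Δt S A a Ξ Λ b Bt P p Ψ x h γ η') η = 0 ↔
      Ψ⁻¹ *ᵥ η = (θ * Δt) • ((S * Sᵀ) *ᵥ (h + η) - ((a + A *ᵥ x) + S *ᵥ γ)) := by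
  rw [fderiv_eq_zero_iff_of_canon (c₁ := (1 : ℝ) / 2)
      (Q := (θ * Δt) • (S * Sᵀ) - Ψ⁻¹)
      (w := (θ * Δt) • ((S * Sᵀ) *ᵥ h - (a + A *ᵥ x) - S *ᵥ γ))
      (C := θ / 2 * (h ⬝ᵥ ((S * Sᵀ) *ᵥ h)) * Δt - θ * (h ⬝ᵥ (a + A *ᵥ x)) * Δt
        - θ * (h ⬝ᵥ (S *ᵥ γ) - Ξ ⬝ᵥ γ) * Δt
        + (1 / 2 : ℝ) * (γ ⬝ᵥ ((Δt • (Λᵀ * P * Λ) - 1) *ᵥ γ)) * Δt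
        + (γ ⬝ᵥ (Λᵀ *ᵥ (P *ᵥ (Δt • b + Bt *ᵥ x) + p))) * Δt)]
  · have he : ((1 : ℝ) / 2) • ((((θ * Δt) • (S * Sᵀ) - Ψ⁻¹)
          + ((θ * Δt) • (S * Sᵀ) - Ψ⁻¹)ᵀ) *ᵥ η)
        + (θ * Δt) • ((S * Sᵀ) *ᵥ h - (a + A *ᵥ x) - S *ᵥ γ)
        = (θ * Δt) • ((S * Sᵀ) *ᵥ (h + η) - ((a + A *ᵥ x) + S *ᵥ γ)) - Ψ⁻¹ *ᵥ η := by
      rw [Matrix.transpose_sub, Matrix.transpose_smul, hM, hΨi]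
      funext i
      simp [Matrix.add_mulVec, Matrix.sub_mulVec, Matrix.mulVec_add,
        Matrix.smul_mulVec]
      ring
    rw [he, sub_eq_zero, eq_comm]
  · intro z
    simp only [FFun, Matrix.mulVec_add, dotProduct_add, add_dotProduct, sub_dotProduct,
      dotProduct_sub, dotProduct_smul, smul_eq_mul, transpose_mulVec_dot,
      Matrix.sub_mulVec, Matrix.smul_mulVec]
    rw [dot_mulVec_symm hM h z]
    ring

end grads

/-- The unique stationary point of `F` (all three gradients vanish) is `(h*, γ*, 0)`,
with the explicit formulas of Proposition 4 (Controls). -/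
theorem F_unique_stationary_point {m n d : ℕ} (θ Δt : ℝ) (hθ : 0 < θ) (hΔt : 0 < Δt)
    (S : Matrix (Fin m) (Fin d) ℝ) (hS : (S * Sᵀ).PosDef)
    (A : Matrix (Fin m) (Fin n) ℝ) (a : Fin m → ℝ) (Ξ : Fin d → ℝ)
    (Λ : Matrix (Fin n) (Fin d) ℝ) (b : Fin n → ℝ) (Bt : Matrix (Fin n) (Fin n) ℝ)
    (P : Matrix (Fin n) (Fin n) ℝ) (hP : P.IsSymm) (p : Fin n → ℝ)
    (Ψ : Matrix (Fin m) (Fin m) ℝ) (hΨ : Ψ.PosDef) (x : Fin n → ℝ)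
    (h𝒜 : (-(Δt • (Λᵀ * P * Λ) - (1 : Matrix (Fin d) (Fin d) ℝ))).PosDef) :
    ∀ (h : Fin m → ℝ) (γ : Fin d → ℝ) (η : Fin m → ℝ),
      (fderiv ℝ (fun h' => FFun θ Δt S A a Ξ Λ b Bt P p Ψ x h' γ η) h = 0 ∧
       fderiv ℝ (fun γ' => FFun θ Δt S A a Ξ Λ b Bt P p Ψ x h γ' η) γ = 0 ∧
       fderiv ℝ (fun η' => FFun θ Δt S A a Ξ Λ b Bt P p Ψ x h γ η') η = 0)
      ↔ (h = (S * Sᵀ)⁻¹ *ᵥ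
            (((1 : Matrix (Fin m) (Fin m) ℝ)
                - θ • (S * (calB θ Δt S Λ P)⁻¹ * Sᵀ * (S * Sᵀ)⁻¹)) *ᵥ (a + A *ᵥ x)
              + (S * (calB θ Δt S Λ P)⁻¹) *ᵥ
                  (Λᵀ *ᵥ (P *ᵥ (Δt • b + Bt *ᵥ x)) + Λᵀ *ᵥ p + θ • Ξ)) ∧
         γ = (calB θ Δt S Λ P)⁻¹ *ᵥ
              ((-θ) • (Sᵀ *ᵥ ((S * Sᵀ)⁻¹ *ᵥ (a + A *ᵥ x)))
                + Λᵀ *ᵥ (P *ᵥ (Δt • b + Bt *ᵥ x)) + Λᵀ *ᵥ p + θ • Ξ) ∧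
         η = 0) := by
  intro h γ η
  have hM : (S * Sᵀ)ᵀ = S * Sᵀ := by
    rw [Matrix.transpose_mul, Matrix.transpose_transpose]
  have hAa : (Δt • (Λᵀ * P * Λ) - 1)ᵀ = Δt • (Λᵀ * P * Λ) - 1 := by
    rw [Matrix.transpose_sub, Matrix.transpose_smul, Matrix.transpose_one,
      Matrix.transpose_mul, Matrix.transpose_mul, Matrix.transpose_transpose, hP.eq,
      Matrix.mul_assoc]
  have hΨs : Ψᵀ = Ψ := by
    have := hΨ.isHermitian.eq
    rwa [Matrix.conjTranspose_eq_transpose_of_trivial] at this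
  have hΨi : (Ψ⁻¹)ᵀ = Ψ⁻¹ := by rw [Matrix.transpose_nonsing_inv, hΨs]
  have hθΔt : θ * Δt ≠ 0 := by positivity
  have hMdet : IsUnit (S * Sᵀ).det := Matrix.isUnit_iff_isUnit_det _ |>.mp hS.isUnit
  have hΨdet : IsUnit Ψ.det := Matrix.isUnit_iff_isUnit_det _ |>.mp hΨ.isUnit
  have hMl : ∀ u, (S * Sᵀ)⁻¹ *ᵥ ((S * Sᵀ) *ᵥ u) = u := by
    intro u
    rw [Matrix.mulVec_mulVec, Matrix.nonsing_inv_mul _ hMdet, Matrix.one_mulVec]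
  have hMr : ∀ u, (S * Sᵀ) *ᵥ ((S * Sᵀ)⁻¹ *ᵥ u) = u := by
    intro u
    rw [Matrix.mulVec_mulVec, Matrix.mul_nonsing_inv _ hMdet, Matrix.one_mulVec]
  have hBpos : (calB θ Δt S Λ P).PosDef := by
    have h1 : (θ • (Sᵀ * (S * Sᵀ)⁻¹ * S)).PosSemidef := by
      apply posSemidef_smul_real _ hθ.le
      have := (hS.inv.posSemidef).conjTranspose_mul_mul_same (B := S)
      simpa [Matrix.conjTranspose_eq_transpose_of_trivial] using this
    have he : calB θ Δt S Λ P
        = θ • (Sᵀ * (S * Sᵀ)⁻¹ * S) + (-(Δt • (Λᵀ * P * Λ) - 1)) := by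
      rw [calB, sub_eq_add_neg]
    rw [he]
    exact Matrix.PosDef.posSemidef_add h1 h𝒜
  have hBdet : IsUnit (calB θ Δt S Λ P).det :=
    Matrix.isUnit_iff_isUnit_det _ |>.mp hBpos.isUnit
  have hBl : ∀ u, (calB θ Δt S Λ P)⁻¹ *ᵥ ((calB θ Δt S Λ P) *ᵥ u) = u := by
    intro u
    rw [Matrix.mulVec_mulVec, Matrix.nonsing_inv_mul _ hBdet, Matrix.one_mulVec]
  have hBr : ∀ u, (calB θ Δt S Λ P) *ᵥ ((calB θ Δt S Λ P)⁻¹ *ᵥ u) = u := by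
    intro u
    rw [Matrix.mulVec_mulVec, Matrix.mul_nonsing_inv _ hBdet, Matrix.one_mulVec]
  -- abbreviations
  set c : Fin m → ℝ := a + A *ᵥ x with hc
  set v : Fin n → ℝ := P *ᵥ (Δt • b + Bt *ᵥ x) + p with hv
  -- canonical stationary point
  set γs : Fin d → ℝ := (calB θ Δt S Λ P)⁻¹ *ᵥ
      ((-θ) • (Sᵀ *ᵥ ((S * Sᵀ)⁻¹ *ᵥ c)) + Λᵀ *ᵥ v + θ • Ξ) with hγs
  set hs : Fin m → ℝ := (S * Sᵀ)⁻¹ *ᵥ (c + S *ᵥ γs) with hhs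
  have hBγs : (calB θ Δt S Λ P) *ᵥ γs
      = (-θ) • (Sᵀ *ᵥ ((S * Sᵀ)⁻¹ *ᵥ c)) + Λᵀ *ᵥ v + θ • Ξ := hBr _
  have hE1s : (S * Sᵀ) *ᵥ hs = c + S *ᵥ γs := hMr _
  -- the γ* of the statement equals γs
  have hγeq : (calB θ Δt S Λ P)⁻¹ *ᵥ
        ((-θ) • (Sᵀ *ᵥ ((S * Sᵀ)⁻¹ *ᵥ c))
          + Λᵀ *ᵥ (P *ᵥ (Δt • b + Bt *ᵥ x)) + Λᵀ *ᵥ p + θ • Ξ) = γs := by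
    rw [hγs, hv]
    refine congrArg (fun u => (calB θ Δt S Λ P)⁻¹ *ᵥ u) ?_
    simp only [Matrix.mulVec_add]
    module
  have hheq : (S * Sᵀ)⁻¹ *ᵥ
        (((1 : Matrix (Fin m) (Fin m) ℝ)
            - θ • (S * (calB θ Δt S Λ P)⁻¹ * Sᵀ * (S * Sᵀ)⁻¹)) *ᵥ c
          + (S * (calB θ Δt S Λ P)⁻¹) *ᵥ
              (Λᵀ *ᵥ (P *ᵥ (Δt • b + Bt *ᵥ x)) + Λᵀ *ᵥ p + θ • Ξ)) = hs := by
    rw [hhs, hγs, hv]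
    refine congrArg (fun u => (S * Sᵀ)⁻¹ *ᵥ u) ?_
    simp only [Matrix.mulVec_add, Matrix.mulVec_smul, Matrix.mulVec_sub,
      Matrix.sub_mulVec, Matrix.add_mulVec, Matrix.smul_mulVec,
      Matrix.one_mulVec, Matrix.mulVec_mulVec, Matrix.mul_assoc]
    module
  -- the three gradient conditions
  rw [gradH_iff θ Δt S A a Ξ Λ b Bt P p Ψ x h γ η hθΔt hM,
    gradG_iff θ Δt S A a Ξ Λ b Bt P p Ψ x h γ η hΔt.ne' hAa,
    gradE_iff θ Δt S A a Ξ Λ b Bt P p Ψ x h γ η hM hΨi, hγeq, hheq]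
  constructor
  · rintro ⟨e1, e2, e3⟩
    have hη : η = 0 := by
      have h0 : Ψ⁻¹ *ᵥ η = 0 := by rw [e3, e1, sub_self, smul_zero]
      have h1 := congrArg (fun u => Ψ *ᵥ u) h0
      simpa [Matrix.mulVec_mulVec, Matrix.mul_nonsing_inv _ hΨdet,
        Matrix.one_mulVec] using h1
    subst hη
    rw [add_zero] at e1 e2
    have hsγ : S *ᵥ γ = (S * Sᵀ) *ᵥ h - c := by rw [e1]; module
    have hAγ : (Δt • (Λᵀ * P * Λ) - 1) *ᵥ γ
        = θ • (Sᵀ *ᵥ h) - Λᵀ *ᵥ v - θ • Ξ := by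
      rw [← e2]; module
    have hBγ : (calB θ Δt S Λ P) *ᵥ γ
        = (-θ) • (Sᵀ *ᵥ ((S * Sᵀ)⁻¹ *ᵥ c)) + Λᵀ *ᵥ v + θ • Ξ := by
      have hx : (Sᵀ * (S * Sᵀ)⁻¹ * S) *ᵥ γ = Sᵀ *ᵥ (h - (S * Sᵀ)⁻¹ *ᵥ c) := by
        rw [← Matrix.mulVec_mulVec, ← Matrix.mulVec_mulVec, hsγ, Matrix.mulVec_sub,
          hMl]
      rw [calB, Matrix.sub_mulVec, Matrix.smul_mulVec, hx, hAγ,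
        Matrix.mulVec_sub]
      module
    have hγ : γ = γs := by rw [hγs, ← hBγ, hBl]
    have hh : h = hs := by
      have h2 := congrArg (fun u => (S * Sᵀ)⁻¹ *ᵥ u) e1
      simp only [hMl] at h2
      rw [h2, hγ, hhs]
    exact ⟨hh, hγ, rfl⟩
  · rintro ⟨rfl, rfl, rfl⟩
    refine ⟨by rw [add_zero]; exact hE1s, ?_,
      by rw [add_zero, hE1s, sub_self, smul_zero, Matrix.mulVec_zero]⟩
    have hAγ : (Δt • (Λᵀ * P * Λ) - 1) *ᵥ γs
        = θ • ((Sᵀ * (S * Sᵀ)⁻¹ * S) *ᵥ γs) - (calB θ Δt S Λ P) *ᵥ γs := by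
      simp only [calB, Matrix.sub_mulVec, Matrix.smul_mulVec, Matrix.one_mulVec]
      module
    have hSh : θ • (Sᵀ *ᵥ hs) = θ • (Sᵀ *ᵥ ((S * Sᵀ)⁻¹ *ᵥ c))
        + θ • ((Sᵀ * (S * Sᵀ)⁻¹ * S) *ᵥ γs) := by
      rw [hhs]
      simp only [Matrix.mulVec_add, Matrix.mulVec_mulVec, smul_add, ← Matrix.mul_assoc]
    rw [add_zero, hAγ, hBγs, hSh]
    module
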